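/- Let X be a set, d : X × X → [0,∞), {x_n} a sequence in X, and m : X × X → [0,∞). The following are equivalent: (i) for every ε > 0 there exist δ > 0 and N ∈ ℕ such that for all p, q ≥ N, m(x_p, x_q) < ε + δ implies d(x_{p+1}, x_{q+1}) ≤ ε; (ii) for every ε > 0 and for any two subsequences {x_{p_i}}, {x_{q_i}}, if limsup_{i→∞} m(x_{p_i}, x_{q_i}) ≤ ε then there exists N with d(x_{p_i+1}, x_{q_i+1}) ≤ ε for all i ≥ N. -/
import Mathlib


open Filter Topology

/-- `(X,d)` is a ν-generalized metric space. -/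
def NuGenMetric (ν : ℕ) {X : Type*} (d : X → X → ℝ) : Prop :=
  (∀ x y, 0 ≤ d x y) ∧
  (∀ x y, d x y = 0 ↔ x = y) ∧
  (∀ x y, d x y = d y x) ∧
  (∀ u : Fin (ν + 2) → X, Function.Injective u →
    d (u 0) (u (Fin.last (ν + 1))) ≤ ∑ i : Fin (ν + 1), d (u i.castSucc) (u i.succ))

/-- `{x n}` is `k`-Cauchy: `lim_n sup_m d(x_n, x_{n+1+mk}) = 0` (sup taken in `[0,∞]`). -/
def IsKCauchy {X : Type*} (d : X → X → ℝ) (x : ℕ → X) (k : ℕ) : Prop :=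
  Filter.Tendsto (fun n => ⨆ m : ℕ, ENNReal.ofReal (d (x n) (x (n + 1 + m * k))))
    Filter.atTop (nhds 0)

theorem stmt_3 {X : Type*} (d m : X → X → ℝ)
    (hd0 : ∀ a b, 0 ≤ d a b) (hm0 : ∀ a b, 0 ≤ m a b) (x : ℕ → X) :
    (∀ ε > (0 : ℝ), ∃ δ > (0 : ℝ), ∃ N : ℕ, ∀ p ≥ N, ∀ q ≥ N,
      m (x p) (x q) < ε + δ → d (x (p + 1)) (x (q + 1)) ≤ ε) ↔
    (∀ ε > (0 : ℝ), ∀ p q : ℕ → ℕ, StrictMono p → StrictMono q →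
      Filter.limsup (fun i => ENNReal.ofReal (m (x (p i)) (x (q i)))) Filter.atTop
        ≤ ENNReal.ofReal ε →
      ∃ N, ∀ i ≥ N, d (x (p i + 1)) (x (q i + 1)) ≤ ε) := by
  constructor
  · rintro h ε hε p q hp hq hlim
    obtain ⟨δ, hδ, N, hN⟩ := h ε hε
    have hlt : Filter.limsup (fun i => ENNReal.ofReal (m (x (p i)) (x (q i)))) Filter.atTop
        < ENNReal.ofReal (ε + δ) := by
      refine lt_of_le_of_lt hlim ?_
      rw [ENNReal.ofReal_lt_ofReal_iff (by linarith)]; linarith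
    have hev := Filter.eventually_lt_of_limsup_lt hlt
    rw [Filter.eventually_atTop] at hev
    obtain ⟨M, hM⟩ := hev
    refine ⟨max M N, fun i hi => ?_⟩
    have h1 : p i ≥ N := le_trans (le_trans (le_max_right M N) hi) hp.le_apply
    have h2 : q i ≥ N := le_trans (le_trans (le_max_right M N) hi) hq.le_apply
    apply hN _ h1 _ h2
    have := hM i (le_trans (le_max_left M N) hi)
    rwa [ENNReal.ofReal_lt_ofReal_iff (by linarith)] at this
  · intro h ε hε
    by_contra hc
    push_neg at hc
    choose P hPge Q hQge hmlt hdgt using fun (i N : ℕ) => hc (1 / (i + 1)) (by positivity) N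
    set f : ℕ → ℕ × ℕ := fun i => Nat.rec (P 0 0, Q 0 0)
      (fun i prev => (P (i + 1) (max prev.1 prev.2 + 1),
                      Q (i + 1) (max prev.1 prev.2 + 1))) i with hf
    have hkey : ∀ i, m (x (f i).1) (x (f i).2) < ε + 1 / (i + 1) ∧
        ε < d (x ((f i).1 + 1)) (x ((f i).2 + 1)) := by
      intro i
      cases i with
      | zero => exact ⟨hmlt 0 0, hdgt 0 0⟩
      | succ n => exact ⟨hmlt (n + 1) _, hdgt (n + 1) _⟩
    have hpmono : StrictMono fun i => (f i).1 := by
      apply strictMono_nat_of_lt_succ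
      intro n
      calc (f n).1 < max (f n).1 (f n).2 + 1 := by
            exact lt_of_le_of_lt (le_max_left _ _) (Nat.lt_succ_self _)
        _ ≤ (f (n + 1)).1 := hPge (n + 1) _
    have hqmono : StrictMono fun i => (f i).2 := by
      apply strictMono_nat_of_lt_succ
      intro n
      calc (f n).2 < max (f n).1 (f n).2 + 1 := by
            exact lt_of_le_of_lt (le_max_right _ _) (Nat.lt_succ_self _)
        _ ≤ (f (n + 1)).2 := hQge (n + 1) _
    have hlimsup : Filter.limsup (fun i => ENNReal.ofReal (m (x ((f i).1)) (x ((f i).2))))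
        Filter.atTop ≤ ENNReal.ofReal ε := by
      have hbound : ∀ i : ℕ, ENNReal.ofReal (m (x ((f i).1)) (x ((f i).2)))
          ≤ ENNReal.ofReal (ε + 1 / (i + 1)) :=
        fun i => ENNReal.ofReal_le_ofReal (hkey i).1.le
      have htend : Filter.Tendsto (fun i : ℕ => ENNReal.ofReal (ε + 1 / (i + 1)))
          Filter.atTop (nhds (ENNReal.ofReal ε)) := by
        apply ENNReal.tendsto_ofReal
        have : Filter.Tendsto (fun i : ℕ => ε + 1 / ((i : ℝ) + 1)) Filter.atTop
            (nhds (ε + 0)) :=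
          tendsto_const_nhds.add tendsto_one_div_add_atTop_nhds_zero_nat
        simpa using this
      calc Filter.limsup (fun i => ENNReal.ofReal (m (x ((f i).1)) (x ((f i).2)))) Filter.atTop
          ≤ Filter.limsup (fun i : ℕ => ENNReal.ofReal (ε + 1 / (i + 1))) Filter.atTop :=
            Filter.limsup_le_limsup (Filter.Eventually.of_forall hbound)
        _ = ENNReal.ofReal ε := htend.limsup_eq
    obtain ⟨N, hN⟩ := h ε hε _ _ hpmono hqmono hlimsup
    exact absurd (hN N le_rfl) (not_le.mpr (hkey N).2)
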